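/- Explicit formula for the Petersson cocycle: for g, h ∈ SL₂(ℝ), ω(g,h) = (1/4)(sign(c_g(−d_g)) + sign(c_h(−d_h)) − sign(c_{gh}(−d_{gh})) − sign(c_g(−d_g)·c_h(−d_h)·c_{gh}(−d_{gh}))), where for a matrix with bottom row (c,d), c(−d) denotes c if c ≠ 0 and −d if c = 0. -/

import Mathlib

open Matrix UpperHalfPlane Complex

abbrev SL2R := Matrix.SpecialLinearGroup (Fin 2) ℝ

/-- The automorphy factor `j(g,z) = cz + d`. -/
noncomputable def jFac (g : SL2R) (z : ℂ) : ℂ :=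
  (g.1 1 0 : ℝ) * z + (g.1 1 1 : ℝ)

/-- Petersson's 2-cocycle
`ω(g,h) = (1/(2πi))(Log j(g, h·z) + Log j(h,z) − Log j(gh,z))`. -/
noncomputable def omegaC (g h : SL2R) (z : ℍ) : ℂ :=
  (1 / (2 * Real.pi * Complex.I)) *
    (Complex.log (jFac g ((h • z : ℍ) : ℂ)) + Complex.log (jFac h (z : ℂ))
      - Complex.log (jFac (g * h) (z : ℂ)))

/-- `c(−d)`: equal to `c` if `c ≠ 0` and to `−d` if `c = 0`, for the bottom row `(c,d)`. -/
noncomputable def cStar (g : SL2R) : ℝ :=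
  if g.1 1 0 ≠ 0 then g.1 1 0 else -g.1 1 1

lemma det_eq' (g : SL2R) : g.1 0 0 * g.1 1 1 - g.1 0 1 * g.1 1 0 = 1 := by
  have := g.2
  rwa [Matrix.det_fin_two] at this

lemma cStar_ne_zero (g : SL2R) : cStar g ≠ 0 := by
  unfold cStar
  by_cases hc : g.1 1 0 = 0
  · simp only [hc, ne_eq, not_true_eq_false, if_false, neg_ne_zero]
    intro hd
    have := det_eq' g
    rw [hc, hd] at this; simp at this
  · simp [hc]

lemma jFac_im (g : SL2R) (z : ℂ) : (jFac g z).im = g.1 1 0 * z.im := by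
  simp [jFac, Complex.add_im, Complex.mul_im]

lemma jFac_ne_zero (g : SL2R) (z : ℂ) (hz : 0 < z.im) : jFac g z ≠ 0 := by
  intro H
  by_cases hc : g.1 1 0 = 0
  · have hd : g.1 1 1 ≠ 0 := by
      intro hd; have := det_eq' g; rw [hc, hd] at this; simp at this
    rw [jFac, hc] at H
    simp at H
    exact hd H
  · have h2 := jFac_im g z
    rw [H] at h2
    simp at h2
    rcases h2 with h | h
    · exact hc h
    · exact hz.ne' h

/-- cocycle identity -/
lemma jFac_cocycle (g h : SL2R) (z : ℍ) :
    jFac (g * h) (z : ℂ) = jFac g ((h • z : ℍ) : ℂ) * jFac h (z : ℂ) := by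
  have hformula : ((h • z : ℍ) : ℂ) =
      ((h.1 0 0 : ℝ) * (z : ℂ) + (h.1 0 1 : ℝ)) / ((h.1 1 0 : ℝ) * (z : ℂ) + (h.1 1 1 : ℝ)) := by
    rw [UpperHalfPlane.specialLinearGroup_apply]
    simp [Algebra.algebraMap_self]
  have hden : ((h.1 1 0 : ℝ) * (z : ℂ) + (h.1 1 1 : ℝ)) ≠ 0 := jFac_ne_zero h z z.2
  rw [jFac, jFac, jFac, hformula]
  field_simp
  simp only [Matrix.SpecialLinearGroup.coe_mul, Matrix.mul_apply, Fin.sum_univ_two]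
  push_cast
  field_simp
  ring

lemma arg_mem_of_cStar_pos (g : SL2R) (z : ℂ) (hz : 0 < z.im) (hs : 0 < cStar g) :
    0 < (jFac g z).arg ∧ (jFac g z).arg ≤ Real.pi := by
  refine ⟨?_, Complex.arg_le_pi _⟩
  unfold cStar at hs
  by_cases hc : g.1 1 0 = 0
  · simp only [hc, ne_eq, not_true_eq_false, if_false] at hs
    have hd : g.1 1 1 < 0 := by linarith
    have h2 : jFac g z = ((g.1 1 1 : ℝ) : ℂ) := by simp [jFac, hc]
    rw [h2, Complex.arg_ofReal_of_neg hd]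
    exact Real.pi_pos
  · simp only [hc, ne_eq, not_false_eq_true, if_true] at hs
    have him : 0 < (jFac g z).im := by rw [jFac_im]; positivity
    rcases lt_trichotomy (jFac g z).arg 0 with h | h | h
    · exact absurd (Complex.arg_neg_iff.mp h) (by linarith)
    · exact absurd (Complex.arg_eq_zero_iff.mp h).2 (by linarith)
    · exact h

lemma arg_mem_of_cStar_neg (g : SL2R) (z : ℂ) (hz : 0 < z.im) (hs : cStar g < 0) :
    -Real.pi < (jFac g z).arg ∧ (jFac g z).arg ≤ 0 := by
  refine ⟨Complex.neg_pi_lt_arg _, ?_⟩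
  unfold cStar at hs
  by_cases hc : g.1 1 0 = 0
  · simp only [hc, ne_eq, not_true_eq_false, if_false] at hs
    have hd : 0 < g.1 1 1 := by linarith
    have h2 : jFac g z = ((g.1 1 1 : ℝ) : ℂ) := by simp [jFac, hc]
    rw [h2, Complex.arg_ofReal_of_nonneg hd.le]
  · simp only [hc, ne_eq, not_false_eq_true, if_true] at hs
    have him : (jFac g z).im < 0 := by
      rw [jFac_im]
      exact mul_neg_of_neg_of_pos hs hz
    exact (Complex.arg_neg_iff.mpr him).le

lemma int_pin {x : ℝ} {n m : ℤ} (hx : x = 2 * Real.pi * n)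
    (h1 : 2 * Real.pi * m - 2 * Real.pi < x) (h2 : x < 2 * Real.pi * m + 2 * Real.pi) :
    n = m := by
  have hpi := Real.pi_pos
  have h1' : (m : ℝ) - 1 < n := by
    by_contra hcon; push_neg at hcon
    nlinarith
  have h2' : (n : ℝ) < m + 1 := by
    by_contra hcon; push_neg at hcon
    nlinarith
  have hA : m - 1 < n := by exact_mod_cast h1'
  have hB : n < m + 1 := by exact_mod_cast h2'
  omega

/-- Asai's explicit formula for the Petersson cocycle. -/
theorem omegaC_explicit (g h : SL2R) (z : ℍ) :
    omegaC g h z = ((1 / 4 : ℝ) * (Real.sign (cStar g) + Real.sign (cStar h)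
      - Real.sign (cStar (g * h))
      - Real.sign (cStar g * cStar h * cStar (g * h))) : ℝ) := by
  set a := jFac g ((h • z : ℍ) : ℂ) with ha_def
  set b := jFac h (z : ℂ) with hb_def
  have hzim : 0 < ((z : ℍ) : ℂ).im := z.2
  have hwim : 0 < ((h • z : ℍ) : ℂ).im := (h • z).2
  have ha : a ≠ 0 := jFac_ne_zero g _ hwim
  have hb : b ≠ 0 := jFac_ne_zero h _ hzim
  have hab : jFac (g * h) (z : ℂ) = a * b := jFac_cocycle g h z
  have hpi : 0 < Real.pi := Real.pi_pos
  set A := a.arg with hA_def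
  set B := b.arg with hB_def
  set C := (a * b).arg with hC_def
  obtain ⟨n, hn⟩ : ∃ k : ℤ, A + B - C = 2 * Real.pi * k := by
    have h2 := Complex.arg_mul_coe_angle ha hb
    rw [← Real.Angle.coe_add, Real.Angle.angle_eq_iff_two_pi_dvd_sub] at h2
    obtain ⟨k, hk⟩ := h2
    exact ⟨-k, by push_cast; linarith⟩
  have hlog : Complex.log a + Complex.log b - Complex.log (a * b)
      = ((A + B - C : ℝ) : ℂ) * Complex.I := by
    rw [Complex.log, Complex.log, Complex.log, norm_mul,
      Real.log_mul (norm_ne_zero_iff.mpr ha) (norm_ne_zero_iff.mpr hb)]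
    push_cast
    ring
  have homega : omegaC g h z = (n : ℂ) := by
    rw [omegaC, ← ha_def, ← hb_def, hab, hlog, hn]
    have hI : (2 : ℂ) * Real.pi * Complex.I ≠ 0 := by
      simp [Complex.I_ne_zero, Real.pi_ne_zero]
    push_cast
    field_simp
  rw [homega]
  have hsg := cStar_ne_zero g
  have hsh := cStar_ne_zero h
  have hsgh := cStar_ne_zero (g * h)
  have hCeq : C = (jFac (g * h) (z : ℂ)).arg := by rw [hab]
  rcases lt_or_gt_of_ne hsg with hg1 | hg1 <;>
    rcases lt_or_gt_of_ne hsh with hh1 | hh1 <;>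
      rcases lt_or_gt_of_ne hsgh with hk1 | hk1
  -- (−,−,−): n = 0
  · obtain ⟨hA1, hA2⟩ := arg_mem_of_cStar_neg g _ hwim hg1
    obtain ⟨hB1, hB2⟩ := arg_mem_of_cStar_neg h _ hzim hh1
    obtain ⟨hC1, hC2⟩ := arg_mem_of_cStar_neg (g * h) _ hzim hk1
    rw [← hA_def] at hA1 hA2; rw [← hB_def] at hB1 hB2; rw [← hCeq] at hC1 hC2
    have hn0 : n = 0 := int_pin hn (by push_cast; linarith) (by push_cast; linarith)
    rw [hn0, Real.sign_of_neg hg1, Real.sign_of_neg hh1, Real.sign_of_neg hk1,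
      Real.sign_of_neg (mul_neg_of_pos_of_neg (mul_pos_of_neg_of_neg hg1 hh1) hk1)]
    norm_num
  -- (−,−,+): n = −1
  · obtain ⟨hA1, hA2⟩ := arg_mem_of_cStar_neg g _ hwim hg1
    obtain ⟨hB1, hB2⟩ := arg_mem_of_cStar_neg h _ hzim hh1
    obtain ⟨hC1, hC2⟩ := arg_mem_of_cStar_pos (g * h) _ hzim hk1
    rw [← hA_def] at hA1 hA2; rw [← hB_def] at hB1 hB2; rw [← hCeq] at hC1 hC2
    have hn0 : n = -1 := int_pin hn (by push_cast; linarith) (by push_cast; linarith)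
    rw [hn0, Real.sign_of_neg hg1, Real.sign_of_neg hh1, Real.sign_of_pos hk1,
      Real.sign_of_pos (mul_pos (mul_pos_of_neg_of_neg hg1 hh1) hk1)]
    norm_num
  -- (−,+,−): n = 0
  · obtain ⟨hA1, hA2⟩ := arg_mem_of_cStar_neg g _ hwim hg1
    obtain ⟨hB1, hB2⟩ := arg_mem_of_cStar_pos h _ hzim hh1
    obtain ⟨hC1, hC2⟩ := arg_mem_of_cStar_neg (g * h) _ hzim hk1
    rw [← hA_def] at hA1 hA2; rw [← hB_def] at hB1 hB2; rw [← hCeq] at hC1 hC2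
    have hn0 : n = 0 := int_pin hn (by push_cast; linarith) (by push_cast; linarith)
    rw [hn0, Real.sign_of_neg hg1, Real.sign_of_pos hh1, Real.sign_of_neg hk1,
      Real.sign_of_pos (mul_pos_of_neg_of_neg (mul_neg_of_neg_of_pos hg1 hh1) hk1)]
    norm_num
  -- (−,+,+): n = 0
  · obtain ⟨hA1, hA2⟩ := arg_mem_of_cStar_neg g _ hwim hg1
    obtain ⟨hB1, hB2⟩ := arg_mem_of_cStar_pos h _ hzim hh1
    obtain ⟨hC1, hC2⟩ := arg_mem_of_cStar_pos (g * h) _ hzim hk1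
    rw [← hA_def] at hA1 hA2; rw [← hB_def] at hB1 hB2; rw [← hCeq] at hC1 hC2
    have hn0 : n = 0 := int_pin hn (by push_cast; linarith) (by push_cast; linarith)
    rw [hn0, Real.sign_of_neg hg1, Real.sign_of_pos hh1, Real.sign_of_pos hk1,
      Real.sign_of_neg (mul_neg_of_neg_of_pos (mul_neg_of_neg_of_pos hg1 hh1) hk1)]
    norm_num
  -- (+,−,−): n = 0
  · obtain ⟨hA1, hA2⟩ := arg_mem_of_cStar_pos g _ hwim hg1
    obtain ⟨hB1, hB2⟩ := arg_mem_of_cStar_neg h _ hzim hh1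
    obtain ⟨hC1, hC2⟩ := arg_mem_of_cStar_neg (g * h) _ hzim hk1
    rw [← hA_def] at hA1 hA2; rw [← hB_def] at hB1 hB2; rw [← hCeq] at hC1 hC2
    have hn0 : n = 0 := int_pin hn (by push_cast; linarith) (by push_cast; linarith)
    rw [hn0, Real.sign_of_pos hg1, Real.sign_of_neg hh1, Real.sign_of_neg hk1,
      Real.sign_of_pos (mul_pos_of_neg_of_neg (mul_neg_of_pos_of_neg hg1 hh1) hk1)]
    norm_num
  -- (+,−,+): n = 0
  · obtain ⟨hA1, hA2⟩ := arg_mem_of_cStar_pos g _ hwim hg1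
    obtain ⟨hB1, hB2⟩ := arg_mem_of_cStar_neg h _ hzim hh1
    obtain ⟨hC1, hC2⟩ := arg_mem_of_cStar_pos (g * h) _ hzim hk1
    rw [← hA_def] at hA1 hA2; rw [← hB_def] at hB1 hB2; rw [← hCeq] at hC1 hC2
    have hn0 : n = 0 := int_pin hn (by push_cast; linarith) (by push_cast; linarith)
    rw [hn0, Real.sign_of_pos hg1, Real.sign_of_neg hh1, Real.sign_of_pos hk1,
      Real.sign_of_neg (mul_neg_of_neg_of_pos (mul_neg_of_pos_of_neg hg1 hh1) hk1)]
    norm_num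
  -- (+,+,−): n = 1
  · obtain ⟨hA1, hA2⟩ := arg_mem_of_cStar_pos g _ hwim hg1
    obtain ⟨hB1, hB2⟩ := arg_mem_of_cStar_pos h _ hzim hh1
    obtain ⟨hC1, hC2⟩ := arg_mem_of_cStar_neg (g * h) _ hzim hk1
    rw [← hA_def] at hA1 hA2; rw [← hB_def] at hB1 hB2; rw [← hCeq] at hC1 hC2
    have hn0 : n = 1 := int_pin hn (by push_cast; linarith) (by push_cast; linarith)
    rw [hn0, Real.sign_of_pos hg1, Real.sign_of_pos hh1, Real.sign_of_neg hk1,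
      Real.sign_of_neg (mul_neg_of_pos_of_neg (mul_pos hg1 hh1) hk1)]
    norm_num
  -- (+,+,+): n = 0
  · obtain ⟨hA1, hA2⟩ := arg_mem_of_cStar_pos g _ hwim hg1
    obtain ⟨hB1, hB2⟩ := arg_mem_of_cStar_pos h _ hzim hh1
    obtain ⟨hC1, hC2⟩ := arg_mem_of_cStar_pos (g * h) _ hzim hk1
    rw [← hA_def] at hA1 hA2; rw [← hB_def] at hB1 hB2; rw [← hCeq] at hC1 hC2
    have hn0 : n = 0 := int_pin hn (by push_cast; linarith) (by push_cast; linarith)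
    rw [hn0, Real.sign_of_pos hg1, Real.sign_of_pos hh1, Real.sign_of_pos hk1,
      Real.sign_of_pos (mul_pos (mul_pos hg1 hh1) hk1)]
    norm_num
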